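/- Let G be a bipartite graph on {x_1,...,x_n} ∪ {y_1,...,y_n} satisfying: (a) {x_i,y_i} ∈ E(G) for all i, and (b) if {x_i,y_j} ∈ E(G) and {x_j,y_k} ∈ E(G) then {x_i,y_k} ∈ E(G) for distinct i,j,k. Then for any nonempty F ⊆ [n], the induced subgraph G_F on {x_i | i ∈ F} ∪ {y_i | i ∈ F} also satisfies (a) and (b) (with indices in F), and every minimal vertex cover of G_F has cardinality |F|. -/

import Mathlib

/-- `C` is a vertex cover of the subgraph of the bipartite graph with
edge relation `E` (edges `{x i, y j}` for `E i j`) induced on the vertices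
`{x i, y i : i ∈ F}`. -/
def IsCoverOn (n : ℕ) (E : Fin n → Fin n → Prop) (F : Set (Fin n))
    (C : Set (Fin n ⊕ Fin n)) : Prop :=
  (∀ v ∈ C, Sum.elim (· ∈ F) (· ∈ F) v) ∧
  (∀ i ∈ F, ∀ j ∈ F, E i j → Sum.inl i ∈ C ∨ Sum.inr j ∈ C)

/-- `C` is a minimal vertex cover of the induced subgraph on `F`. -/
def IsMinCoverOn (n : ℕ) (E : Fin n → Fin n → Prop) (F : Set (Fin n))
    (C : Set (Fin n ⊕ Fin n)) : Prop :=
  IsCoverOn n E F C ∧ ∀ D ⊂ C, ¬ IsCoverOn n E F D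

/-- The vertex set `{x k : k ∈ α} ∪ {y k : k ∈ F \ α}` attached to `α ⊆ F`. -/
def coverSetOn (n : ℕ) (F α : Set (Fin n)) : Set (Fin n ⊕ Fin n) :=
  (Sum.inl '' α) ∪ (Sum.inr '' (F \ α))

/-- The lattice `L_{G_F}` of the induced subgraph `G_F`: those `α ⊆ F` whose
associated vertex set is a minimal vertex cover of `G_F`. -/
def LGF (n : ℕ) (E : Fin n → Fin n → Prop) (F : Set (Fin n)) : Set (Set (Fin n)) :=
  {α | α ⊆ F ∧ IsMinCoverOn n E F (coverSetOn n F α)}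

/-- Remark 1.1: for `∅ ≠ F ⊆ [n]` the induced subgraph `G_F` again satisfies
conditions (a) and (b), and every minimal vertex cover of `G_F` has
cardinality `|F|`. -/
theorem stmt2 (n : ℕ) (E : Fin n → Fin n → Prop)
    (ha : ∀ i, E i i)
    (hb : ∀ i j k : Fin n, i ≠ j → j ≠ k → i ≠ k → E i j → E j k → E i k)
    (F : Set (Fin n)) (hF : F.Nonempty) :
    (∀ i ∈ F, E i i) ∧
    (∀ i ∈ F, ∀ j ∈ F, ∀ k ∈ F, i ≠ j → j ≠ k → i ≠ k → E i j → E j k → E i k) ∧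
    (∀ C : Set (Fin n ⊕ Fin n), IsMinCoverOn n E F C → C.ncard = F.ncard) := by
  refine ⟨fun i _ => ha i, fun i _ j _ k _ => hb i j k, fun C hC => ?_⟩
  obtain ⟨⟨hmem, hcov⟩, hmin⟩ := hC
  -- not both endpoints of a pair belong to C
  have key : ∀ i : Fin n, ¬ (Sum.inl i ∈ C ∧ Sum.inr i ∈ C) := by
    rintro i ⟨hl, hr⟩
    have hiF : i ∈ F := hmem _ hl
    -- remove inl i: some edge E i k uncovered with inr k ∉ C
    have h1 : ∃ k ∈ F, E i k ∧ Sum.inr k ∉ C ∧ k ≠ i := by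
      have hD : ¬ IsCoverOn n E F (C \ {Sum.inl i}) := by
        apply hmin
        exact ⟨Set.diff_subset, fun h => (h hl).2 rfl⟩
      simp only [IsCoverOn, not_and_or] at hD
      rcases hD with hD | hD
      · exact absurd (fun v hv => hmem v hv.1) hD
      · push_neg at hD
        obtain ⟨j, hjF, k, hkF, hE, hjn, hkn⟩ := hD
        have hkC : Sum.inr k ∉ C := fun h => hkn ⟨h, by simp⟩
        have hji : j = i := by
          rcases hcov j hjF k hkF hE with h | h
          · by_contra hne
            exact hjn ⟨h, by simp [hne]⟩
          · exact absurd h hkC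
        subst hji
        exact ⟨k, hkF, hE, hkC, fun h => hkC (h ▸ hr)⟩
    -- remove inr i: some edge E j i uncovered with inl j ∉ C
    have h2 : ∃ j ∈ F, E j i ∧ Sum.inl j ∉ C ∧ j ≠ i := by
      have hD : ¬ IsCoverOn n E F (C \ {Sum.inr i}) := by
        apply hmin
        exact ⟨Set.diff_subset, fun h => (h hr).2 rfl⟩
      simp only [IsCoverOn, not_and_or] at hD
      rcases hD with hD | hD
      · exact absurd (fun v hv => hmem v hv.1) hD
      · push_neg at hD
        obtain ⟨j, hjF, k, hkF, hE, hjn, hkn⟩ := hD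
        have hjC : Sum.inl j ∉ C := fun h => hjn ⟨h, by simp⟩
        have hki : k = i := by
          rcases hcov j hjF k hkF hE with h | h
          · exact absurd h hjC
          · by_contra hne
            exact hkn ⟨h, by simp [hne]⟩
        subst hki
        exact ⟨j, hjF, hE, hjC, fun h => hjC (h ▸ hl)⟩
    obtain ⟨k, hkF, hEik, hkC, hki⟩ := h1
    obtain ⟨j, hjF, hEji, hjC, hji⟩ := h2
    by_cases hjk : j = k
    · subst hjk
      rcases hcov j hjF j hjF (ha j) with h | h
      · exact hjC h
      · exact hkC h
    · have : E j k := hb j i k hji (Ne.symm hki) hjk hEji hEik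
      rcases hcov j hjF k hkF this with h | h
      · exact hjC h
      · exact hkC h
  -- the index map
  set f : Fin n ⊕ Fin n → Fin n := Sum.elim id id with hf
  have himg : f '' C = F := by
    apply Set.Subset.antisymm
    · rintro _ ⟨v, hv, rfl⟩
      have := hmem v hv
      cases v <;> simpa [hf] using this
    · intro i hi
      rcases hcov i hi i hi (ha i) with h | h
      · exact ⟨Sum.inl i, h, rfl⟩
      · exact ⟨Sum.inr i, h, rfl⟩
  have hinj : Set.InjOn f C := by
    rintro u hu v hv huv
    cases u with
    | inl a =>
      cases v with
      | inl b => simpa [hf] using huv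
      | inr b =>
        simp only [hf, Sum.elim_inl, Sum.elim_inr, id] at huv
        subst huv
        exact absurd ⟨hu, hv⟩ (key a)
    | inr a =>
      cases v with
      | inl b =>
        simp only [hf, Sum.elim_inl, Sum.elim_inr, id] at huv
        subst huv
        exact absurd ⟨hv, hu⟩ (key a)
      | inr b => simpa [hf] using huv
  calc C.ncard = (f '' C).ncard := (Set.ncard_image_of_injOn hinj).symm
    _ = F.ncard := by rw [himg]
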